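/- arXiv:1210.1903 — 2 statements merged into one kernel-verified Lean document; each statement's English description precedes it below -/
import Mathlib

section
/- Let M be a 2n×2n complex skew-symmetric matrix (M* = -M) and T a 2n×n complex matrix of rank n with T*MT = 0. Then for any 2n×n complex matrix S, det(S*MT) = (-1)^n · det(T|S) · Pf(M), where Pf(M) is the Pfaffian of M. -/
open Matrix

/-- The `2n × 2n` matrix obtained by juxtaposing the columns of two `2n × n` matrices. -/
noncomputable def juxt {n : ℕ} (T S : Matrix (Fin (n + n)) (Fin n) ℂ) :
    Matrix (Fin (n + n)) (Fin (n + n)) ℂ :=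
  (Matrix.fromCols T S).submatrix id finSumFinEquiv.symm

lemma neg_one_pow_mul_self (n : ℕ) : ((-1 : ℂ)) ^ n * (-1) ^ n = 1 := by
  rw [← mul_pow]; norm_num

lemma det_fromBlocks_zero_one (n : ℕ) :
    det (fromBlocks (0 : Matrix (Fin n) (Fin n) ℂ) (1 : Matrix (Fin n) (Fin n) ℂ)
      (1 : Matrix (Fin n) (Fin n) ℂ) (0 : Matrix (Fin n) (Fin n) ℂ)) = (-1 : ℂ) ^ n := by
  have h : fromBlocks (1 : Matrix (Fin n) (Fin n) ℂ) 0 (-1) 1 *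
      (fromBlocks (1 : Matrix (Fin n) (Fin n) ℂ) (1 : Matrix (Fin n) (Fin n) ℂ)
        (0 : Matrix (Fin n) (Fin n) ℂ) (1 : Matrix (Fin n) (Fin n) ℂ) * fromBlocks 0 1 1 0) = fromBlocks 1 1 0 (-1) := by
    simp [fromBlocks_multiply]
  have h2 := congrArg det h
  simpa [det_mul, det_fromBlocks_zero₁₂, det_fromBlocks_zero₂₁, det_neg] using h2

lemma det_fromBlocks_zero11 {n : ℕ} (B C D : Matrix (Fin n) (Fin n) ℂ) :
    det (fromBlocks 0 B C D) = (-1 : ℂ) ^ n * (B.det * C.det) := by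
  have h : fromBlocks B 0 D C * fromBlocks (0 : Matrix (Fin n) (Fin n) ℂ)
      (1 : Matrix (Fin n) (Fin n) ℂ) (1 : Matrix (Fin n) (Fin n) ℂ)
      (0 : Matrix (Fin n) (Fin n) ℂ) = fromBlocks 0 B C D := by
    simp [fromBlocks_multiply]
  rw [← h, det_mul, det_fromBlocks_zero₁₂, det_fromBlocks_zero_one]; ring

lemma keyA (n : ℕ) (M : Matrix (Fin (n + n)) (Fin (n + n)) ℂ) (hM : Mᵀ = -M)
    (T : Matrix (Fin (n + n)) (Fin n) ℂ) (hTMT : Tᵀ * M * T = 0)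
    (S : Matrix (Fin (n + n)) (Fin n) ℂ) :
    (Sᵀ * M * T).det ^ 2 = (juxt T S).det ^ 2 * M.det := by
  set e : Fin n ⊕ Fin n ≃ Fin (n + n) := finSumFinEquiv with he
  set J := fromCols T S with hJ
  set A : Matrix (Fin n ⊕ Fin n) (Fin n ⊕ Fin n) ℂ := J.submatrix e id with hA
  have hjuxt : juxt T S = A.submatrix e.symm e.symm := by
    ext i j
    simp [juxt, hA, Matrix.submatrix_apply]
    rfl
  have hdetj : (juxt T S).det = A.det := by
    rw [hjuxt, det_submatrix_equiv_self]
  have hAT : Aᵀ = Jᵀ.submatrix id ⇑e := by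
    ext i j; simp [hA]
  have hN : Aᵀ * M.submatrix ⇑e ⇑e * A = Jᵀ * M * J := by
    rw [hAT, hA]
    calc Jᵀ.submatrix id ⇑e * M.submatrix ⇑e ⇑e * J.submatrix ⇑e id
        = (Jᵀ * M).submatrix id ⇑e * J.submatrix ⇑e id := by
          rw [submatrix_mul_equiv]
      _ = ((Jᵀ * M) * J).submatrix id id := by rw [submatrix_mul_equiv]
      _ = Jᵀ * M * J := by rw [submatrix_id_id]
  have hTMS : Tᵀ * M * S = -(Sᵀ * M * T)ᵀ := by
    have : (Sᵀ * M * T)ᵀ = Tᵀ * Mᵀ * S := by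
      rw [transpose_mul, transpose_mul, transpose_transpose, Matrix.mul_assoc]
    rw [this, hM]
    simp [Matrix.mul_assoc]
  have hblocks : Jᵀ * M * J =
      fromBlocks 0 (-(Sᵀ * M * T)ᵀ) (Sᵀ * M * T) (Sᵀ * M * S) := by
    rw [hJ, transpose_fromCols, Matrix.mul_assoc, mul_fromCols,
      fromRows_mul_fromCols]
    rw [← Matrix.mul_assoc, ← Matrix.mul_assoc, ← Matrix.mul_assoc, ← Matrix.mul_assoc,
      hTMT, hTMS]
  have hdetN : (Jᵀ * M * J).det = (Sᵀ * M * T).det ^ 2 := by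
    rw [hblocks, det_fromBlocks_zero11, det_neg, det_transpose, Fintype.card_fin]
    linear_combination ((Sᵀ * M * T).det * (Sᵀ * M * T).det) * neg_one_pow_mul_self n
  have hdetN' : (Jᵀ * M * J).det = (juxt T S).det ^ 2 * M.det := by
    rw [← hN, det_mul, det_mul, det_transpose, det_submatrix_equiv_self, hdetj]
    ring
  rw [← hdetN, hdetN']

/-- if `M` is skew-symmetric (`Mᵀ = -M`) and `T` has rank `n` with
`Tᵀ M T = 0`, then there is a scalar `pf` (the Pfaffian of `M`, so `pf ^ 2 = det M`)
such that for every `S`, `det(Sᵀ M T) = (-1)^n det(T|S) pf`. -/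
theorem stmt1 (n : ℕ) (M : Matrix (Fin (n + n)) (Fin (n + n)) ℂ)
    (hM : Mᵀ = -M)
    (T : Matrix (Fin (n + n)) (Fin n) ℂ) (hT : T.rank = n)
    (hTMT : Tᵀ * M * T = 0) :
    ∃ pf : ℂ, pf ^ 2 = M.det ∧
      ∀ S : Matrix (Fin (n + n)) (Fin n) ℂ,
        (Sᵀ * M * T).det = (-1 : ℂ) ^ n * (juxt T S).det * pf := by
  classical
  obtain ⟨c, hc⟩ : ∃ c : ℂ, c ^ 2 = M.det :=
    IsAlgClosed.exists_pow_nat_eq M.det two_pos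
  -- polynomial setup
  set R := MvPolynomial (Fin (n + n) × Fin n) ℂ with hR
  set Sp : Matrix (Fin (n + n)) (Fin n) R :=
    Matrix.of (fun i j => MvPolynomial.X (i, j)) with hSp
  set Mp : Matrix (Fin (n + n)) (Fin (n + n)) R := M.map MvPolynomial.C with hMp
  set Tp : Matrix (Fin (n + n)) (Fin n) R := T.map MvPolynomial.C with hTp
  set P : R := (Spᵀ * Mp * Tp).det with hP
  set Q : R := ((fromCols Tp Sp).submatrix id finSumFinEquiv.symm).det with hQ
  have hevalP : ∀ S : Matrix (Fin (n + n)) (Fin n) ℂ,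
      MvPolynomial.eval (fun p => S p.1 p.2) P = (Sᵀ * M * T).det := by
    intro S
    rw [hP, RingHom.map_det]
    congr 1
    ext i j
    simp [Matrix.mul_apply, hSp, hMp, hTp, Finset.mul_sum]
  have hevalQ : ∀ S : Matrix (Fin (n + n)) (Fin n) ℂ,
      MvPolynomial.eval (fun p => S p.1 p.2) Q = (juxt T S).det := by
    intro S
    rw [hQ, RingHom.map_det]
    congr 1
    ext i j
    rcases h : finSumFinEquiv.symm j with k | k <;>
      simp [juxt, fromCols, h, hTp, hSp]
  have hPQ : (P - MvPolynomial.C c * Q) * (P + MvPolynomial.C c * Q) = 0 := by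
    apply MvPolynomial.funext
    intro x
    set S : Matrix (Fin (n + n)) (Fin n) ℂ := Matrix.of (fun i j => x (i, j)) with hS
    have hx : x = fun p => S p.1 p.2 := by funext p; simp [hS]
    have h1 := hevalP S
    have h2 := hevalQ S
    have heval : (MvPolynomial.eval fun p => S p.1 p.2)
        ((P - MvPolynomial.C c * Q) * (P + MvPolynomial.C c * Q)) =
        ((Sᵀ * M * T).det - c * (juxt T S).det) *
          ((Sᵀ * M * T).det + c * (juxt T S).det) := by
      simp only [_root_.map_mul, map_sub, map_add, MvPolynomial.eval_C, h1, h2]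
    rw [hx, heval, map_zero]
    have h3 := keyA n M hM T hTMT S
    rw [← hc] at h3
    linear_combination h3
  rcases mul_eq_zero.mp hPQ with h | h
  · refine ⟨(-1 : ℂ) ^ n * c, by linear_combination (c ^ 2) * neg_one_pow_mul_self n + hc, ?_⟩
    intro S
    have := sub_eq_zero.mp h
    have hev := congrArg (MvPolynomial.eval (fun p => S p.1 p.2)) this
    rw [hevalP S, _root_.map_mul, MvPolynomial.eval_C, hevalQ S] at hev
    rw [hev]
    linear_combination (-(juxt T S).det * c) * neg_one_pow_mul_self n
  · refine ⟨-((-1 : ℂ) ^ n * c), by linear_combination (c ^ 2) * neg_one_pow_mul_self n + hc, ?_⟩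
    intro S
    have hP' : P = -(MvPolynomial.C c * Q) := eq_neg_of_add_eq_zero_left h
    have hev := congrArg (MvPolynomial.eval (fun p => S p.1 p.2)) hP'
    rw [hevalP S, map_neg, _root_.map_mul, MvPolynomial.eval_C, hevalQ S] at hev
    rw [hev]
    linear_combination ((juxt T S).det * c) * neg_one_pow_mul_self n
end

section
/- Let M be a 2n×2n complex matrix of rank 2n−1 and T a 2n×n complex matrix of rank n with TᵀMT = 0. If S is a 2n×n complex matrix with det(SᵀMT) = 0 and the 2n×2n matrix (T|S) is invertible, then the right kernel of M (the one-dimensional kernel of the linear map v ↦ Mv) is contained in the column span of T. -/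
open Matrix

/-- if `M` has rank `2n - 1`, `T` has rank `n`, `Tᵀ M T = 0`,
`det(Sᵀ M T) = 0` and `T|S` is invertible, then the right kernel of `M`
is contained in the column span of `T`. -/
theorem stmt2 (n : ℕ) (M : Matrix (Fin (n + n)) (Fin (n + n)) ℂ)
    (hM : M.rank = n + n - 1)
    (T : Matrix (Fin (n + n)) (Fin n) ℂ) (hT : T.rank = n)
    (hTMT : Tᵀ * M * T = 0)
    (S : Matrix (Fin (n + n)) (Fin n) ℂ)
    (hS : (Sᵀ * M * T).det = 0)
    (hTS : IsUnit (juxt T S)) :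
    ∀ v : Fin (n + n) → ℂ, M.mulVec v = 0 → ∃ c : Fin n → ℂ, v = T.mulVec c := by
  intro v hv
  rcases Nat.eq_zero_or_pos n with hn | hn
  · subst hn
    exact ⟨0, funext fun i => absurd i.2 (by omega)⟩
  -- key injectivity fact from invertibility of juxt T S
  have key : ∀ x : Fin (n + n) → ℂ, Tᵀ.mulVec x = 0 → Sᵀ.mulVec x = 0 → x = 0 := by
    intro x hTx hSx
    have hJt : (juxt T S)ᵀ.mulVec x = 0 := by
      funext j
      have : (juxt T S)ᵀ.mulVec x j =
          Sum.elim (Tᵀ.mulVec x) (Sᵀ.mulVec x) (finSumFinEquiv.symm j) := by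
        rcases h : finSumFinEquiv.symm j with k | k <;>
          simp [juxt, Matrix.mulVec, dotProduct, Matrix.fromCols, h,
            Matrix.transpose_apply, mul_comm]
      rw [this, hTx, hSx]
      rcases finSumFinEquiv.symm j with k | k <;> simp
    have hdet : IsUnit ((juxt T S)ᵀ).det := by
      rw [Matrix.det_transpose]
      exact (Matrix.isUnit_iff_isUnit_det _).mp hTS
    have hinv : ((juxt T S)ᵀ)⁻¹ * (juxt T S)ᵀ = 1 :=
      Matrix.nonsing_inv_mul _ hdet
    calc x = (1 : Matrix (Fin (n+n)) (Fin (n+n)) ℂ).mulVec x := by simp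
    _ = (((juxt T S)ᵀ)⁻¹ * (juxt T S)ᵀ).mulVec x := by rw [hinv]
    _ = (((juxt T S)ᵀ)⁻¹).mulVec ((juxt T S)ᵀ.mulVec x) := by
        rw [Matrix.mulVec_mulVec]
    _ = 0 := by rw [hJt]; simp
  -- T has trivial kernel
  have hTrank : T.rank = Module.finrank ℂ (LinearMap.range T.mulVecLin) := rfl
  have hTker : LinearMap.ker T.mulVecLin = ⊥ := by
    have h1 := LinearMap.finrank_range_add_finrank_ker T.mulVecLin
    simp only [Module.finrank_pi, Fintype.card_fin] at h1
    rw [← hTrank, hT] at h1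
    exact Submodule.finrank_eq_zero.mp (by omega)
  -- the element w in the kernel of Sᵀ M T
  obtain ⟨w, hw0, hBw⟩ := (Matrix.exists_mulVec_eq_zero_iff).mpr hS
  set u := T.mulVec w with hu
  have hTu : Tᵀ.mulVec (M.mulVec u) = 0 := by
    rw [hu, Matrix.mulVec_mulVec, Matrix.mulVec_mulVec, hTMT,
      Matrix.zero_mulVec]
  have hSu : Sᵀ.mulVec (M.mulVec u) = 0 := by
    rw [hu, Matrix.mulVec_mulVec, Matrix.mulVec_mulVec]
    exact hBw
  have hMu : M.mulVec u = 0 := key _ hTu hSu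
  have hu0 : u ≠ 0 := by
    intro h
    apply hw0
    have : w ∈ LinearMap.ker T.mulVecLin := by
      simp [LinearMap.mem_ker, Matrix.mulVecLin_apply, ← hu, h]
    rwa [hTker, Submodule.mem_bot] at this
  -- kernel of M has dimension 1
  have hMrank : M.rank = Module.finrank ℂ (LinearMap.range M.mulVecLin) := rfl
  have hKer1 : Module.finrank ℂ (LinearMap.ker M.mulVecLin) = 1 := by
    have h1 := LinearMap.finrank_range_add_finrank_ker M.mulVecLin
    simp only [Module.finrank_pi, Fintype.card_fin] at h1
    rw [← hMrank, hM] at h1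
    omega
  have huK : u ∈ LinearMap.ker M.mulVecLin := by
    simp [LinearMap.mem_ker, Matrix.mulVecLin_apply, hMu]
  have hvK : v ∈ LinearMap.ker M.mulVecLin := by
    simp [LinearMap.mem_ker, Matrix.mulVecLin_apply, hv]
  have hspan : Submodule.span ℂ {u} = LinearMap.ker M.mulVecLin := by
    apply Submodule.eq_of_le_of_finrank_eq
    · rw [Submodule.span_le, Set.singleton_subset_iff]; exact huK
    · rw [hKer1, finrank_span_singleton hu0]
  rw [← hspan] at hvK
  obtain ⟨a, ha⟩ := Submodule.mem_span_singleton.mp hvK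
  exact ⟨a • w, by rw [Matrix.mulVec_smul, ← hu, ha]⟩
end
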